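/- Let Ω ⊆ ℝ^N be measurable, u ∈ 𝓜(Ω), and (u_n) ⊂ 𝓜(Ω) a sequence with ‖u_n − u‖_{𝓛(Ω)} → 0 as n → ∞. Then for every α > 0, lim_{n→∞} ∫_Ω ( e^{α u_n²} − 1 ) dx = ∫_Ω ( e^{α u²} − 1 ) dx. -/

import Mathlib

open MeasureTheory Filter

/-- The Luxemburg norm ‖u‖_{𝓛} := inf{ k > 0 : ∫ (e^{(u/k)²} − 1) dμ ≤ 1 }. -/
noncomputable def luxNorm {α : Type*} [MeasurableSpace α] (μ : Measure α) (u : α → ℝ) : ℝ :=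
  sInf {k : ℝ | 0 < k ∧ ∫⁻ x, ENNReal.ofReal (Real.exp ((u x / k) ^ 2) - 1) ∂μ ≤ 1}

section Aux

open ENNReal

noncomputable def Jint {X : Type*} [MeasurableSpace X] (μ : Measure X) (β : ℝ) (w : X → ℝ) : ℝ≥0∞ :=
  ∫⁻ x, ENNReal.ofReal (Real.exp (β * w x ^ 2) - 1) ∂μ

lemma Jmeas {X : Type*} [MeasurableSpace X] {w : X → ℝ} (hw : Measurable w) (β : ℝ) :
    Measurable fun x => ENNReal.ofReal (Real.exp (β * w x ^ 2) - 1) :=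
  ENNReal.measurable_ofReal.comp ((Real.measurable_exp.comp ((hw.pow_const 2).const_mul β)).sub measurable_const)

lemma Jmeas2 {X : Type*} [MeasurableSpace X] {w : X → ℝ} (hw : Measurable w) (k : ℝ) :
    Measurable fun x => ENNReal.ofReal (Real.exp ((w x / k) ^ 2) - 1) :=
  ENNReal.measurable_ofReal.comp ((Real.measurable_exp.comp ((hw.div_const k).pow_const 2)).sub measurable_const)

lemma Jmono {X : Type*} [MeasurableSpace X] (μ : Measure X) {β β' : ℝ} (w : X → ℝ)
    (h : β ≤ β') : Jint μ β w ≤ Jint μ β' w := by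
  refine lintegral_mono fun x => ENNReal.ofReal_le_ofReal ?_
  exact sub_le_sub_right (Real.exp_le_exp.2 (mul_le_mul_of_nonneg_right h (sq_nonneg _))) 1

lemma Jcongr {X : Type*} [MeasurableSpace X] (μ : Measure X) {β : ℝ} {w w' : X → ℝ}
    (h : ∀ x, w x ^ 2 = w' x ^ 2) : Jint μ β w = Jint μ β w' := by
  unfold Jint
  congr 1 with x
  rw [h]

lemma Jfin_of {X : Type*} [MeasurableSpace X] (μ : Measure X) {w : X → ℝ}
    (hM : ∀ k : ℝ, 0 < k → ∫⁻ x, ENNReal.ofReal (Real.exp ((w x / k) ^ 2) - 1) ∂μ < ⊤)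
    {β : ℝ} (hβ : 0 < β) : Jint μ β w < ⊤ := by
  have hk : (0:ℝ) < (Real.sqrt β)⁻¹ := by positivity
  have h2 := hM _ hk
  have heq : ∀ x, (w x / (Real.sqrt β)⁻¹) ^ 2 = β * w x ^ 2 := by
    intro x
    rw [div_eq_mul_inv, inv_inv, mul_pow, Real.sq_sqrt hβ.le, mul_comm]
  calc Jint μ β w = ∫⁻ x, ENNReal.ofReal (Real.exp ((w x / (Real.sqrt β)⁻¹) ^ 2) - 1) ∂μ := by
        unfold Jint; congr 1 with x; rw [heq]
    _ < ⊤ := h2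

lemma conv_ineq {θ s : ℝ} (hθ0 : 0 ≤ θ) (hθ1 : θ ≤ 1) (hs : 0 ≤ s) :
    Real.exp (θ * s) - 1 ≤ θ * (Real.exp s - 1) := by
  have h := convexOn_exp.2 (Set.mem_univ s) (Set.mem_univ (0:ℝ)) hθ0 (by linarith : (0:ℝ) ≤ 1 - θ) (by ring)
  simp only [smul_eq_mul, mul_zero, add_zero, Real.exp_zero, mul_one] at h
  linarith

lemma key_ineq {a b η : ℝ} (ha : 1 ≤ a) (hb : 1 ≤ b) (hη : 0 < η) :
    a * b - 1 ≤ (a - 1) + (b - 1) + η / 2 * (a ^ 2 - 1) + 1 / (2 * η) * (b ^ 2 - 1) := by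
  have h1 : (a - 1) * (b - 1) ≤ η / 2 * (a - 1) ^ 2 + 1 / (2 * η) * (b - 1) ^ 2 := by
    rw [← sub_nonneg]
    have key : η / 2 * (a - 1) ^ 2 + 1 / (2 * η) * (b - 1) ^ 2 - (a - 1) * (b - 1)
        = (η * (a - 1) - (b - 1)) ^ 2 / (2 * η) := by field_simp; ring
    rw [key]; positivity
  have hη2 : (0:ℝ) ≤ η / 2 := by positivity
  have hη3 : (0:ℝ) ≤ 1 / (2 * η) := by positivity
  have ca : (a - 1) ^ 2 ≤ a ^ 2 - 1 := by nlinarith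
  have cb : (b - 1) ^ 2 ≤ b ^ 2 - 1 := by nlinarith
  have ca' := mul_le_mul_of_nonneg_left ca hη2
  have cb' := mul_le_mul_of_nonneg_left cb hη3
  nlinarith [h1, ca', cb']

lemma pt_ineq {A B η : ℝ} (hA : 0 ≤ A) (hB : 0 ≤ B) (hη : 0 < η) :
    ENNReal.ofReal (Real.exp (A + B) - 1) ≤
      ENNReal.ofReal (Real.exp A - 1) + ENNReal.ofReal (Real.exp B - 1)
      + ENNReal.ofReal (η / 2) * ENNReal.ofReal (Real.exp (2 * A) - 1)
      + ENNReal.ofReal (1 / (2 * η)) * ENNReal.ofReal (Real.exp (2 * B) - 1) := by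
  have e1 : (0:ℝ) ≤ Real.exp A - 1 := by linarith [Real.one_le_exp hA]
  have e2 : (0:ℝ) ≤ Real.exp B - 1 := by linarith [Real.one_le_exp hB]
  have e3 : (0:ℝ) ≤ Real.exp (2 * A) - 1 := by linarith [Real.one_le_exp (by linarith : (0:ℝ) ≤ 2 * A)]
  have e4 : (0:ℝ) ≤ Real.exp (2 * B) - 1 := by linarith [Real.one_le_exp (by linarith : (0:ℝ) ≤ 2 * B)]
  rw [← ENNReal.ofReal_mul (by positivity), ← ENNReal.ofReal_mul (by positivity),
    ← ENNReal.ofReal_add e1 e2, ← ENNReal.ofReal_add (by positivity) (by positivity),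
    ← ENNReal.ofReal_add (by positivity) (by positivity)]
  apply ENNReal.ofReal_le_ofReal
  have h2A : Real.exp (2 * A) = Real.exp A ^ 2 := by rw [two_mul, Real.exp_add, sq]
  have h2B : Real.exp (2 * B) = Real.exp B ^ 2 := by rw [two_mul, Real.exp_add, sq]
  rw [Real.exp_add, h2A, h2B]
  exact key_ineq (Real.one_le_exp hA) (Real.one_le_exp hB) hη

lemma lint4 {X : Type*} [MeasurableSpace X] (μ : Measure X) {h1 h2 h3 h4 : X → ℝ≥0∞}
    (m1 : Measurable h1) (m3 : Measurable h3) (m4 : Measurable h4) (c3 c4 : ℝ≥0∞) :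
    ∫⁻ x, (h1 x + h2 x + c3 * h3 x + c4 * h4 x) ∂μ
      = (∫⁻ x, h1 x ∂μ) + (∫⁻ x, h2 x ∂μ) + c3 * (∫⁻ x, h3 x ∂μ) + c4 * (∫⁻ x, h4 x ∂μ) := by
  rw [lintegral_add_right _ (m4.const_mul c4), lintegral_add_right _ (m3.const_mul c3),
    lintegral_add_left m1, lintegral_const_mul c3 m3, lintegral_const_mul c4 m4]

lemma J_upper {X : Type*} [MeasurableSpace X] (μ : Measure X) {f g : X → ℝ}
    (hf : Measurable f) (hg : Measurable g) {a ε η : ℝ} (ha : 0 < a) (hε : 0 < ε) (hη : 0 < η) :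
    Jint μ a g ≤ Jint μ ((1 + ε) * a) f + Jint μ ((1 + 1/ε) * a) (fun x => g x - f x)
      + ENNReal.ofReal (η / 2) * Jint μ (2 * ((1 + ε) * a)) f
      + ENNReal.ofReal (1 / (2 * η)) * Jint μ (2 * ((1 + 1/ε) * a)) (fun x => g x - f x) := by
  have hA0 : ∀ x, 0 ≤ (1 + ε) * a * f x ^ 2 := fun x => by positivity
  have hB0 : ∀ x, 0 ≤ (1 + 1/ε) * a * (g x - f x) ^ 2 := fun x => by positivity
  calc Jint μ a g
      ≤ ∫⁻ x, ENNReal.ofReal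
          (Real.exp ((1 + ε) * a * f x ^ 2 + (1 + 1/ε) * a * (g x - f x) ^ 2) - 1) ∂μ := by
        refine lintegral_mono fun x => ENNReal.ofReal_le_ofReal (sub_le_sub_right (Real.exp_le_exp.2 ?_) 1)
        have key : (1 + ε) * f x ^ 2 + (1 + 1/ε) * (g x - f x) ^ 2 - g x ^ 2
            = (ε * f x - (g x - f x)) ^ 2 / ε := by field_simp; ring
        have h0 : g x ^ 2 ≤ (1 + ε) * f x ^ 2 + (1 + 1/ε) * (g x - f x) ^ 2 := by
          nlinarith [key, div_nonneg (sq_nonneg (ε * f x - (g x - f x))) hε.le]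
        calc a * g x ^ 2 ≤ a * ((1 + ε) * f x ^ 2 + (1 + 1/ε) * (g x - f x) ^ 2) :=
              mul_le_mul_of_nonneg_left h0 ha.le
          _ = (1 + ε) * a * f x ^ 2 + (1 + 1/ε) * a * (g x - f x) ^ 2 := by ring
    _ ≤ ∫⁻ x, (ENNReal.ofReal (Real.exp ((1 + ε) * a * f x ^ 2) - 1)
          + ENNReal.ofReal (Real.exp ((1 + 1/ε) * a * (g x - f x) ^ 2) - 1)
          + ENNReal.ofReal (η / 2) * ENNReal.ofReal (Real.exp (2 * ((1 + ε) * a * f x ^ 2)) - 1)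
          + ENNReal.ofReal (1 / (2 * η)) * ENNReal.ofReal (Real.exp (2 * ((1 + 1/ε) * a * (g x - f x) ^ 2)) - 1)) ∂μ :=
        lintegral_mono fun x => pt_ineq (hA0 x) (hB0 x) hη
    _ = Jint μ ((1 + ε) * a) f + Jint μ ((1 + 1/ε) * a) (fun x => g x - f x)
          + ENNReal.ofReal (η / 2) * Jint μ (2 * ((1 + ε) * a)) f
          + ENNReal.ofReal (1 / (2 * η)) * Jint μ (2 * ((1 + 1/ε) * a)) (fun x => g x - f x) := by
        have e3 : ∀ x : X, (2 * ((1 + ε) * a * f x ^ 2)) = (2 * ((1 + ε) * a)) * f x ^ 2 := fun x => by ring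
        have e4 : ∀ x : X, (2 * ((1 + 1/ε) * a * (g x - f x) ^ 2)) = (2 * ((1 + 1/ε) * a)) * (g x - f x) ^ 2 := fun x => by ring
        simp only [e3, e4]
        exact lint4 μ (Jmeas hf _) (Jmeas hf _) (Jmeas (hg.sub hf) _) _ _

lemma J_cont {X : Type*} [MeasurableSpace X] (μ : Measure X) {w : X → ℝ} (hw : Measurable w)
    {a : ℝ} (hfin : Jint μ (2 * a) w < ⊤) {c : ℕ → ℝ}
    (hc : Tendsto c atTop (nhds a)) (hc2 : ∀ m, c m ≤ 2 * a) :
    Tendsto (fun m => Jint μ (c m) w) atTop (nhds (Jint μ a w)) := by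
  unfold Jint at *
  refine tendsto_lintegral_of_dominated_convergence
    (fun x => ENNReal.ofReal (Real.exp (2 * a * w x ^ 2) - 1))
    (fun m => Jmeas hw (c m)) (fun m => ae_of_all _ fun x => ?_) hfin.ne
    (ae_of_all _ fun x => ?_)
  · exact ENNReal.ofReal_le_ofReal (sub_le_sub_right
      (Real.exp_le_exp.2 (mul_le_mul_of_nonneg_right (hc2 m) (sq_nonneg _))) 1)
  · exact (ENNReal.continuous_ofReal.tendsto _).comp
      (((Real.continuous_exp.tendsto _).comp (hc.mul_const _)).sub_const 1)

lemma J_small {X : Type*} [MeasurableSpace X] (μ : Measure X) {v : ℕ → X → ℝ}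
    (hv : ∀ n, Measurable (v n))
    (hfin : ∀ n, Jint μ 1 (v n) < ⊤)
    (hlux : Tendsto (fun n => luxNorm μ (v n)) atTop (nhds 0)) :
    ∀ β : ℝ, 0 < β → Tendsto (fun n => Jint μ β (v n)) atTop (nhds 0) := by
  intro β hβ
  rw [ENNReal.tendsto_nhds_zero]
  intro ε hε
  obtain ⟨θ, hθ0, hθ1, hθε⟩ : ∃ θ : ℝ, 0 < θ ∧ θ ≤ 1 ∧ ENNReal.ofReal θ ≤ ε := by
    rcases le_or_gt 1 ε with h | h
    · exact ⟨1, one_pos, le_refl _, by simpa using h⟩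
    · refine ⟨ε.toReal, ENNReal.toReal_pos hε.ne' (h.trans_le le_top).ne, ?_, ?_⟩
      · exact ENNReal.toReal_le_of_le_ofReal one_pos.le (by simpa using h.le)
      · rw [ENNReal.ofReal_toReal (h.trans_le le_top).ne]
  set δ := Real.sqrt (θ / β) with hδdef
  have hδ : 0 < δ := Real.sqrt_pos.2 (by positivity)
  filter_upwards [hlux.eventually (gt_mem_nhds hδ)] with n hn
  set S : Set ℝ := {k : ℝ | 0 < k ∧ ∫⁻ x, ENNReal.ofReal (Real.exp ((v n x / k) ^ 2) - 1) ∂μ ≤ 1} with hS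
  have hMfin := hfin n
  set M : ℝ≥0∞ := Jint μ 1 (v n) with hM
  have hSne : S.Nonempty := by
    set θ' : ℝ := min 1 (1 / (M.toReal + 1)) with hθ'
    have hθ'0 : 0 < θ' := lt_min one_pos (by positivity)
    have hθ'1 : θ' ≤ 1 := min_le_left _ _
    refine ⟨(Real.sqrt θ')⁻¹, by positivity, ?_⟩
    have heq : ∀ x, (v n x / (Real.sqrt θ')⁻¹) ^ 2 = θ' * v n x ^ 2 := by
      intro x
      rw [div_eq_mul_inv, inv_inv, mul_pow, Real.sq_sqrt hθ'0.le, mul_comm]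
    calc ∫⁻ x, ENNReal.ofReal (Real.exp ((v n x / (Real.sqrt θ')⁻¹) ^ 2) - 1) ∂μ
        ≤ ∫⁻ x, ENNReal.ofReal θ' * ENNReal.ofReal (Real.exp (1 * v n x ^ 2) - 1) ∂μ := by
          refine lintegral_mono fun x => ?_
          rw [heq x, ← ENNReal.ofReal_mul hθ'0.le]
          exact ENNReal.ofReal_le_ofReal (by simpa using conv_ineq hθ'0.le hθ'1 (sq_nonneg (v n x)))
      _ = ENNReal.ofReal θ' * M := by
          rw [lintegral_const_mul _ (Jmeas (hv n) 1)]; rfl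
      _ ≤ ENNReal.ofReal (1 / (M.toReal + 1)) * ENNReal.ofReal M.toReal := by
          rw [ENNReal.ofReal_toReal hMfin.ne]
          exact mul_le_mul_left (ENNReal.ofReal_le_ofReal (min_le_right _ _)) _
      _ ≤ 1 := by
          rw [← ENNReal.ofReal_mul (by positivity), ← ENNReal.ofReal_one]
          refine ENNReal.ofReal_le_ofReal ?_
          rw [div_mul_eq_mul_div, one_mul, div_le_one (by positivity)]
          linarith [ENNReal.toReal_nonneg (a := M)]
  have hbdd : BddBelow S := ⟨0, fun k hk => hk.1.le⟩
  have hlt : sInf S < δ := hn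
  obtain ⟨k, hkS, hkδ⟩ := (csInf_lt_iff hbdd hSne).1 hlt
  have hk0 : 0 < k := hkS.1
  have hδ2 : δ ^ 2 = θ / β := Real.sq_sqrt (by positivity)
  have hpt : ∀ x, ENNReal.ofReal (Real.exp (β * v n x ^ 2) - 1)
      ≤ ENNReal.ofReal θ * ENNReal.ofReal (Real.exp ((v n x / k) ^ 2) - 1) := by
    intro x
    rw [← ENNReal.ofReal_mul hθ0.le]
    refine ENNReal.ofReal_le_ofReal ?_
    have h1 : β * v n x ^ 2 = θ * (v n x / δ) ^ 2 := by
      rw [div_pow, hδ2]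
      field_simp
    have h2 : (v n x / δ) ^ 2 ≤ (v n x / k) ^ 2 := by
      rw [div_pow, div_pow]
      exact div_le_div_of_nonneg_left (sq_nonneg _) (by positivity) (by nlinarith)
    calc Real.exp (β * v n x ^ 2) - 1 ≤ θ * (Real.exp ((v n x / δ) ^ 2) - 1) := by
          rw [h1]; exact conv_ineq hθ0.le hθ1 (sq_nonneg _)
      _ ≤ θ * (Real.exp ((v n x / k) ^ 2) - 1) :=
          mul_le_mul_of_nonneg_left (sub_le_sub_right (Real.exp_le_exp.2 h2) 1) hθ0.le
  calc Jint μ β (v n) ≤ ∫⁻ x, ENNReal.ofReal θ * ENNReal.ofReal (Real.exp ((v n x / k) ^ 2) - 1) ∂μ :=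
        lintegral_mono hpt
    _ = ENNReal.ofReal θ * ∫⁻ x, ENNReal.ofReal (Real.exp ((v n x / k) ^ 2) - 1) ∂μ :=
        lintegral_const_mul _ (Jmeas2 (hv n) k)
    _ ≤ ENNReal.ofReal θ * 1 := mul_le_mul_right hkS.2 _
    _ ≤ ε := by rw [mul_one]; exact hθε

lemma eta_choice (C q : ℝ≥0∞) (hC : C ≠ ⊤) (hq : 0 < q) (hqt : q ≠ ⊤) :
    ∃ η : ℝ, 0 < η ∧ ENNReal.ofReal (η / 2) * C ≤ q := by
  have hq0 : 0 < q.toReal := ENNReal.toReal_pos hq.ne' hqt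
  refine ⟨q.toReal / (C.toReal + 1), by positivity, ?_⟩
  have hCt : (0:ℝ) ≤ C.toReal := ENNReal.toReal_nonneg
  calc ENNReal.ofReal (q.toReal / (C.toReal + 1) / 2) * C
      = ENNReal.ofReal (q.toReal / (C.toReal + 1) / 2 * C.toReal) := by
        rw [← ENNReal.ofReal_toReal hC, ← ENNReal.ofReal_mul (by positivity)]
        rw [ENNReal.ofReal_toReal hC]
    _ ≤ ENNReal.ofReal q.toReal := by
        refine ENNReal.ofReal_le_ofReal ?_
        rw [div_div, div_mul_eq_mul_div, div_le_iff₀ (by positivity)]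
        nlinarith
    _ = q := ENNReal.ofReal_toReal hqt

end Aux


/-- Let Ω ⊆ ℝ^N be measurable, u ∈ 𝓜(Ω), and (u_n) ⊂ 𝓜(Ω) with ‖u_n − u‖_{𝓛(Ω)} → 0.
Then for every α > 0, ∫_Ω (e^{α u_n²} − 1) dx → ∫_Ω (e^{α u²} − 1) dx. -/
theorem stmt_3 {N : ℕ} (Ω : Set (EuclideanSpace ℝ (Fin N))) (hΩ : MeasurableSet Ω)
    (u : EuclideanSpace ℝ (Fin N) → ℝ) (un : ℕ → EuclideanSpace ℝ (Fin N) → ℝ)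
    (hu : Measurable u) (hun : ∀ n, Measurable (un n))
    (huM : ∀ k : ℝ, 0 < k →
      ∫⁻ x in Ω, ENNReal.ofReal (Real.exp ((u x / k) ^ 2) - 1) < ⊤)
    (hunM : ∀ n, ∀ k : ℝ, 0 < k →
      ∫⁻ x in Ω, ENNReal.ofReal (Real.exp ((un n x / k) ^ 2) - 1) < ⊤)
    (hlux : Tendsto (fun n => luxNorm (volume.restrict Ω) (fun x => un n x - u x))
      atTop (nhds 0)) :
    ∀ α : ℝ, 0 < α →
      Tendsto (fun n => ∫⁻ x in Ω,
          ENNReal.ofReal (Real.exp (α * (un n x) ^ 2) - 1))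
        atTop (nhds (∫⁻ x in Ω, ENNReal.ofReal (Real.exp (α * (u x) ^ 2) - 1))) := by
  intro α hα
  set μ := volume.restrict Ω with hμ
  have huF : ∀ β : ℝ, 0 < β → Jint μ β u < ⊤ := fun β hβ => Jfin_of μ huM hβ
  have hunF : ∀ n, ∀ β : ℝ, 0 < β → Jint μ β (un n) < ⊤ := fun n β hβ => Jfin_of μ (hunM n) hβ
  have hvF : ∀ n, ∀ β : ℝ, 0 < β → Jint μ β (fun x => un n x - u x) < ⊤ := by
    intro n β hβ
    have h := J_upper μ (f := un n) (g := fun x => un n x - u x) (hun n) ((hun n).sub hu)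
      hβ one_pos one_pos
    refine lt_of_le_of_lt h ?_
    have hc1 : Jint μ ((1 + 1) * β) (un n) < ⊤ := hunF n _ (by positivity)
    have hrw : Jint μ ((1 + 1/1) * β) (fun x => (un n x - u x) - un n x) = Jint μ ((1 + 1/1) * β) u :=
      Jcongr μ fun x => by ring
    have hc2 : Jint μ ((1 + 1/1) * β) (fun x => (un n x - u x) - un n x) < ⊤ := by
      rw [hrw]; exact huF _ (by positivity)
    have hc3 : Jint μ (2 * ((1 + 1) * β)) (un n) < ⊤ := hunF n _ (by positivity)
    have hrw4 : Jint μ (2 * ((1 + 1/1) * β)) (fun x => (un n x - u x) - un n x)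
        = Jint μ (2 * ((1 + 1/1) * β)) u := Jcongr μ fun x => by ring
    have hc4 : Jint μ (2 * ((1 + 1/1) * β)) (fun x => (un n x - u x) - un n x) < ⊤ := by
      rw [hrw4]; exact huF _ (by positivity)
    have m3 : ENNReal.ofReal ((1:ℝ) / 2) * Jint μ (2 * ((1 + 1) * β)) (un n) < ⊤ :=
      ENNReal.mul_lt_top ENNReal.ofReal_lt_top hc3
    have m4 : ENNReal.ofReal (1 / (2 * (1:ℝ))) * Jint μ (2 * ((1 + 1/1) * β)) (fun x => (un n x - u x) - un n x) < ⊤ :=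
      ENNReal.mul_lt_top ENNReal.ofReal_lt_top hc4
    exact ENNReal.add_lt_top.2 ⟨ENNReal.add_lt_top.2 ⟨ENNReal.add_lt_top.2 ⟨hc1, hc2⟩, m3⟩, m4⟩
  have hsmall : ∀ β : ℝ, 0 < β →
      Tendsto (fun n => Jint μ β (fun x => un n x - u x)) atTop (nhds 0) :=
    J_small μ (fun n => (hun n).sub hu) (fun n => hvF n 1 one_pos) hlux
  show Tendsto (fun n => Jint μ α (un n)) atTop (nhds (Jint μ α u))
  set L := Jint μ α u with hL
  have hLfin : L < ⊤ := huF α hα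
  rw [ENNReal.tendsto_nhds hLfin.ne]
  intro ε hε
  set ε₀ := min ε 1 with hε₀def
  have hε₀ : 0 < ε₀ := lt_min hε one_pos
  have hε₀top : ε₀ ≠ ⊤ := ((min_le_right ε 1).trans_lt ENNReal.one_lt_top).ne
  have hε₀ε : ε₀ ≤ ε := min_le_left _ _
  set q := ε₀ / 4 with hqdef
  have hq0 : 0 < q := ENNReal.div_pos hε₀.ne' (by norm_num)
  have hqt : q ≠ ⊤ := (ENNReal.div_lt_top hε₀top (by norm_num)).ne
  have hq4 : q + q + q + q = ε₀ := by
    rw [hqdef]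
    calc ε₀ / 4 + ε₀ / 4 + ε₀ / 4 + ε₀ / 4 = 4 * (ε₀ / 4) := by ring
      _ = ε₀ := ENNReal.mul_div_cancel' (by norm_num) (by norm_num)
  have hseq : Tendsto (fun m : ℕ => 1 + 1 / ((m:ℝ) + 1)) atTop (nhds 1) := by
    have h0 := tendsto_one_div_add_atTop_nhds_zero_nat (𝕜 := ℝ)
    have h := (tendsto_const_nhds (x := (1:ℝ)) (f := (atTop : Filter ℕ))).add h0
    simpa using h
  -- UPPER BOUND
  have hupper : ∀ᶠ n in atTop, Jint μ α (un n) ≤ L + ε₀ := by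
    have hcseq : Tendsto (fun m : ℕ => (1 + 1/((m:ℝ)+1)) * α) atTop (nhds α) := by
      have h := hseq.mul_const α
      simpa using h
    have hcle : ∀ m : ℕ, (1 + 1/((m:ℝ)+1)) * α ≤ 2 * α := by
      intro m
      have h1 : 1/((m:ℝ)+1) ≤ 1 := by
        rw [div_le_one (by positivity)]
        have : (0:ℝ) ≤ (m:ℝ) := Nat.cast_nonneg m
        linarith
      nlinarith
    have hcont := J_cont μ hu (huF (2*α) (by positivity)) hcseq hcle
    have hLL : Jint μ α u < L + q := ENNReal.lt_add_right hLfin.ne hq0.ne'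
    obtain ⟨m, hm⟩ := (hcont.eventually (Iio_mem_nhds hLL)).exists
    have hm : Jint μ ((1 + 1/((m:ℝ)+1)) * α) u < L + q := hm
    set δ : ℝ := 1/((m:ℝ)+1) with hδdef
    have hδ0 : 0 < δ := by positivity
    obtain ⟨η, hη0, hηC⟩ := eta_choice (Jint μ (2*((1+δ)*α)) u) q (huF _ (by positivity)).ne hq0 hqt
    have hev1 := (ENNReal.tendsto_nhds_zero.1 (hsmall ((1+1/δ)*α) (by positivity))) q hq0
    have hev2 : ∀ᶠ n in atTop,
        ENNReal.ofReal (1/(2*η)) * Jint μ (2*((1+1/δ)*α)) (fun x => un n x - u x) ≤ q := by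
      have ht0 := hsmall (2*((1+1/δ)*α)) (by positivity)
      have ht := ENNReal.Tendsto.const_mul (a := ENNReal.ofReal (1/(2*η))) ht0 (Or.inr ENNReal.ofReal_ne_top)
      rw [mul_zero] at ht
      exact (ENNReal.tendsto_nhds_zero.1 ht) q hq0
    filter_upwards [hev1, hev2] with n h1 h2
    have hup := J_upper μ (f := u) (g := un n) hu (hun n) hα hδ0 hη0
    calc Jint μ α (un n) ≤ _ := hup
      _ ≤ (L + q) + q + q + q :=
          add_le_add (add_le_add (add_le_add hm.le h1) hηC) h2
      _ = L + ε₀ := by rw [← hq4]; ring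
  -- uniform bound on Jint μ (2*α) (un n)
  have hbddK : ∃ K : ENNReal, K ≠ ⊤ ∧ ∀ᶠ n in atTop, Jint μ (2*α) (un n) ≤ K := by
    have h1 := (ENNReal.tendsto_nhds_zero.1 (hsmall ((1+1/1)*(2*α)) (by positivity))) 1 one_pos
    have h2 := (ENNReal.tendsto_nhds_zero.1 (hsmall (2*((1+1/1)*(2*α))) (by positivity))) 1 one_pos
    refine ⟨Jint μ ((1+1)*(2*α)) u + 1 + ENNReal.ofReal ((1:ℝ)/2) * Jint μ (2*((1+1)*(2*α))) u + 1, ?_, ?_⟩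
    · have f1 := huF ((1+1)*(2*α)) (by positivity)
      have f2 := huF (2*((1+1)*(2*α))) (by positivity)
      exact (ENNReal.add_lt_top.2 ⟨ENNReal.add_lt_top.2 ⟨ENNReal.add_lt_top.2
        ⟨f1, ENNReal.one_lt_top⟩, ENNReal.mul_lt_top ENNReal.ofReal_lt_top f2⟩,
        ENNReal.one_lt_top⟩).ne
    · filter_upwards [h1, h2] with n hn1 hn2
      have hup := J_upper μ (f := u) (g := un n) hu (hun n) (a := 2*α) (by positivity) one_pos one_pos
      refine hup.trans ?_
      refine add_le_add (add_le_add (add_le_add le_rfl hn1) le_rfl) ?_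
      calc ENNReal.ofReal (1/(2*(1:ℝ))) * Jint μ (2*((1+1/1)*(2*α))) (fun x => un n x - u x)
          ≤ 1 * 1 := mul_le_mul' (ENNReal.ofReal_le_one.2 (by norm_num)) hn2
        _ = 1 := one_mul 1
  -- LOWER BOUND
  have hlower : ∀ᶠ n in atTop, L ≤ Jint μ α (un n) + ε₀ := by
    obtain ⟨K, hKt, hKev⟩ := hbddK
    have hcseq : Tendsto (fun m : ℕ => α / (1 + 1/((m:ℝ)+1))) atTop (nhds α) := by
      have h := (tendsto_const_nhds (x := α) (f := (atTop : Filter ℕ))).div hseq one_ne_zero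
      simpa only [div_one, Pi.div_def] using h
    have hcle : ∀ m : ℕ, α / (1 + 1/((m:ℝ)+1)) ≤ 2 * α := by
      intro m
      have hm0 : (0:ℝ) ≤ (m:ℝ) := Nat.cast_nonneg m
      have hpos : (0:ℝ) < 1 + 1/((m:ℝ)+1) := by positivity
      rw [div_le_iff₀ hpos]
      have hinv : (0:ℝ) < 1/((m:ℝ)+1) := by positivity
      nlinarith
    have hcont := J_cont μ hu (huF (2*α) (by positivity)) hcseq hcle
    have hicc := (ENNReal.tendsto_nhds hLfin.ne).1 hcont q hq0
    obtain ⟨m, hm⟩ := hicc.exists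
    set δ : ℝ := 1/((m:ℝ)+1) with hδdef
    have hδ0 : 0 < δ := by positivity
    have hmL : L ≤ Jint μ (α/(1+δ)) u + q := tsub_le_iff_right.1 hm.1
    have harith : (1+δ)*(α/(1+δ)) = α := by field_simp
    obtain ⟨η, hη0, hηK⟩ := eta_choice K q hKt hq0 hqt
    have hev1 := (ENNReal.tendsto_nhds_zero.1
      (hsmall ((1+1/δ)*(α/(1+δ))) (by positivity))) q hq0
    have hev2 : ∀ᶠ n in atTop,
        ENNReal.ofReal (1/(2*η)) * Jint μ (2*((1+1/δ)*(α/(1+δ)))) (fun x => un n x - u x) ≤ q := by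
      have ht0 := hsmall (2*((1+1/δ)*(α/(1+δ)))) (by positivity)
      have ht := ENNReal.Tendsto.const_mul (a := ENNReal.ofReal (1/(2*η))) ht0 (Or.inr ENNReal.ofReal_ne_top)
      rw [mul_zero] at ht
      exact (ENNReal.tendsto_nhds_zero.1 ht) q hq0
    filter_upwards [hKev, hev1, hev2] with n hK1 h1 h2
    have hup := J_upper μ (f := un n) (g := u) (hun n) hu (a := α/(1+δ)) (by positivity) hδ0 hη0
    rw [harith] at hup
    have hflip : ∀ c : ℝ, Jint μ c (fun x => u x - un n x) = Jint μ c (fun x => un n x - u x) :=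
      fun c => Jcongr μ fun x => by ring
    rw [hflip, hflip] at hup
    calc L ≤ Jint μ (α/(1+δ)) u + q := hmL
      _ ≤ (Jint μ α (un n) + q + q + q) + q := by
          refine add_le_add (hup.trans ?_) le_rfl
          refine add_le_add (add_le_add (add_le_add le_rfl h1) ?_) h2
          exact le_trans (mul_le_mul' le_rfl hK1) hηK
      _ = Jint μ α (un n) + ε₀ := by rw [← hq4]; ring
  filter_upwards [hupper, hlower] with n h1 h2
  constructor
  · exact le_trans (tsub_le_tsub_left hε₀ε L) (tsub_le_iff_right.2 h2)
  · exact h1.trans (add_le_add le_rfl hε₀ε)
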